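/- Let u(1,1,Q) > u(1,0,Q), c > 0, and let f₀, f₁ be positive densities with strictly increasing likelihood ratio and symmetric structure f₀(s) = f₁(−s). Suppose c > lim_{s→1} [f₀(s)/(f₀(s)+f₁(s))]·(u(1,1,Q) − u(1,0,Q)) (cost exceeds the value of perfect information at the strongest signal). Then there exists a unique s(c) ∈ (0,1) with f₁(s(c))/(f₀(s(c))+f₁(s(c)))·u(1,1,Q) + f₀(s(c))/(f₀(s(c))+f₁(s(c)))·u(1,0,Q) = u(1,1,Q) − c, and the expected payoff from following the signal strictly exceeds u(1,1,Q) − c exactly on s ∈ (s(c), 1). -/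

import Mathlib

open Set Filter

/-- Bounded-beliefs observation cutoff: if the cost `c` exceeds the value of perfect
information at the strongest signal but is below half the payoff gap, there is a
unique cutoff `s(c) ∈ (0,1)` where the signal-following payoff equals `u(1,1,Q) - c`,
and the signal-following payoff exceeds `u(1,1,Q) - c` exactly on `(s(c), 1)`. -/
theorem observation_cutoff_bounded
    (f₀ f₁ : ℝ → ℝ)
    (hc₀ : ContinuousOn f₀ (Ioo (-1:ℝ) 1)) (hc₁ : ContinuousOn f₁ (Ioo (-1:ℝ) 1))
    (hpos₀ : ∀ s ∈ Ioo (-1:ℝ) 1, 0 < f₀ s) (hpos₁ : ∀ s ∈ Ioo (-1:ℝ) 1, 0 < f₁ s)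
    (hsymm : ∀ s ∈ Ioo (-1:ℝ) 1, f₀ s = f₁ (-s))
    (hmlrp : StrictMonoOn (fun s => f₁ s / f₀ s) (Ioo (-1:ℝ) 1))
    (u11Q u10Q c L : ℝ) (hu : u10Q < u11Q) (hc : 0 < c)
    (hL : Tendsto (fun s => f₀ s / (f₀ s + f₁ s))
      (nhdsWithin 1 (Ioo (-1:ℝ) 1)) (nhds L))
    (hcbig : c > L * (u11Q - u10Q))
    (hcsmall : c < (u11Q - u10Q) / 2) :
    ∃ sc ∈ Ioo (0:ℝ) 1,
      (f₁ sc / (f₀ sc + f₁ sc) * u11Q + f₀ sc / (f₀ sc + f₁ sc) * u10Q = u11Q - c) ∧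
      (∀ s' ∈ Ioo (0:ℝ) 1,
        f₁ s' / (f₀ s' + f₁ s') * u11Q + f₀ s' / (f₀ s' + f₁ s') * u10Q = u11Q - c →
        s' = sc) ∧
      (∀ s ∈ Ioo (-1:ℝ) 1,
        (f₁ s / (f₀ s + f₁ s) * u11Q + f₀ s / (f₀ s + f₁ s) * u10Q > u11Q - c ↔
          sc < s)) := by
  set Δ := u11Q - u10Q with hΔdef
  have hΔ : 0 < Δ := sub_pos.2 hu
  set g : ℝ → ℝ := fun s => f₁ s / (f₀ s + f₁ s) with hg
  set t : ℝ := (Δ - c) / Δ with ht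
  have hP : ∀ s ∈ Ioo (-1:ℝ) 1, 0 < f₀ s + f₁ s := fun s hs =>
    add_pos (hpos₀ s hs) (hpos₁ s hs)
  -- payoff rewriting
  have hpay : ∀ s ∈ Ioo (-1:ℝ) 1,
      f₁ s / (f₀ s + f₁ s) * u11Q + f₀ s / (f₀ s + f₁ s) * u10Q = u10Q + g s * Δ := by
    intro s hs
    have h := (hP s hs).ne'
    simp only [hg, hΔdef]
    field_simp
    ring
  -- g is strictly monotone on Ioo (-1) 1
  have hgmono : StrictMonoOn g (Ioo (-1:ℝ) 1) := by
    intro a ha b hb hab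
    have h0a := hpos₀ a ha; have h1a := hpos₁ a ha
    have h0b := hpos₀ b hb; have h1b := hpos₁ b hb
    have hr := hmlrp ha hb hab
    simp only at hr
    rw [div_lt_div_iff₀ h0a h0b] at hr
    simp only [hg]
    rw [div_lt_div_iff₀ (hP a ha) (hP b hb)]
    nlinarith
  -- g is continuous on Ioo (-1) 1
  have hgcont : ContinuousOn g (Ioo (-1:ℝ) 1) :=
    hc₁.div (hc₀.add hc₁) (fun s hs => (hP s hs).ne')
  have h0mem : (0:ℝ) ∈ Ioo (-1:ℝ) 1 := by constructor <;> norm_num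
  -- g 0 = 1/2
  have hg0 : g 0 = 1 / 2 := by
    have h := hsymm 0 h0mem
    simp only [neg_zero] at h
    simp only [hg, h]
    have := hpos₁ 0 h0mem
    field_simp
    ring
  -- 1/2 < t < 1 - L
  have ht12 : (1:ℝ)/2 < t := by
    rw [ht]
    rw [lt_div_iff₀ hΔ]
    linarith
  have htL : t < 1 - L := by
    rw [ht, div_lt_iff₀ hΔ]
    nlinarith
  -- g tends to 1 - L at the right end
  have hgL : Tendsto g (nhdsWithin 1 (Ioo (-1:ℝ) 1)) (nhds (1 - L)) := by
    have h1 : Tendsto (fun s => 1 - f₀ s / (f₀ s + f₁ s))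
        (nhdsWithin 1 (Ioo (-1:ℝ) 1)) (nhds (1 - L)) := tendsto_const_nhds.sub hL
    refine h1.congr' ?_
    filter_upwards [self_mem_nhdsWithin] with s hs
    have h := (hP s hs).ne'
    simp only [hg]
    field_simp
    ring
  -- find s₁ with g s₁ > t
  have hNB : (nhdsWithin (1:ℝ) (Ioo (-1:ℝ) 1)).NeBot :=
    right_nhdsWithin_Ioo_neBot (by norm_num)
  have hev : ∀ᶠ s in nhdsWithin (1:ℝ) (Ioo (-1:ℝ) 1), t < g s := by
    have := hgL.eventually (eventually_gt_nhds htL)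
    exact this
  obtain ⟨s₁, hs₁t, hs₁mem⟩ := (hev.and self_mem_nhdsWithin).exists
  -- s₁ > 0 since g s₁ > t > 1/2 = g 0
  have hs₁pos : 0 < s₁ := by
    by_contra h
    push_neg at h
    rcases eq_or_lt_of_le h with h' | h'
    · rw [h', hg0] at hs₁t; linarith
    · have := hgmono hs₁mem h0mem h'
      rw [hg0] at this; linarith
  -- IVT on [0, s₁]
  have hsub : Icc (0:ℝ) s₁ ⊆ Ioo (-1:ℝ) 1 := fun x hx =>
    ⟨by linarith [hx.1], lt_of_le_of_lt hx.2 hs₁mem.2⟩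
  have hIVT := intermediate_value_Ioo (le_of_lt hs₁pos) (hgcont.mono hsub)
  have htmem : t ∈ Ioo (g 0) (g s₁) := ⟨by rw [hg0]; exact ht12, hs₁t⟩
  obtain ⟨sc, hscmem, hgsc⟩ := hIVT htmem
  have hsc01 : sc ∈ Ioo (0:ℝ) 1 := ⟨hscmem.1, lt_trans hscmem.2 hs₁mem.2⟩
  have hscI : sc ∈ Ioo (-1:ℝ) 1 := ⟨by linarith [hsc01.1], hsc01.2⟩
  -- key equivalence: payoff s = u11Q - c ↔ g s = t, and > ↔ >
  have htΔ : u10Q + t * Δ = u11Q - c := by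
    rw [ht]; field_simp; ring
  refine ⟨sc, hsc01, ?_, ?_, ?_⟩
  · rw [hpay sc hscI, hgsc, htΔ]
  · intro s' hs' heq
    have hs'I : s' ∈ Ioo (-1:ℝ) 1 := ⟨by linarith [hs'.1], hs'.2⟩
    rw [hpay s' hs'I, ← htΔ] at heq
    have hgs' : g s' = t := by
      have := mul_right_cancel₀ hΔ.ne' (by linarith : g s' * Δ = t * Δ)
      exact this
    exact hgmono.injOn hs'I hscI (by rw [hgs', hgsc])
  · intro s hs
    rw [hpay s hs, ← htΔ, ← hgsc]
    constructor
    · intro h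
      have : g sc < g s := lt_of_mul_lt_mul_right (by linarith) hΔ.le
      by_contra hle
      push_neg at hle
      rcases eq_or_lt_of_le hle with h' | h'
      · rw [h'] at this; exact lt_irrefl _ this
      · exact absurd (hgmono hs hscI h') (not_lt.2 this.le)
    · intro h
      have := hgmono hscI hs h
      nlinarith
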